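/- The function h(τ) = δ - 1/2 + ∫_{2/τ}^∞ (x² - 4/τ²) φ(x) dx - t/τ² is strictly increasing on (0, ∞), tends to -∞ as τ → 0⁺, and tends to δ > 0 as τ → ∞; consequently h has a unique zero on (0,∞). -/

import Mathlib

open Real Set MeasureTheory Filter Topology

/-- standard normal density -/
noncomputable def stdPDF (x : ℝ) : ℝ := Real.exp (-x ^ 2 / 2) / Real.sqrt (2 * Real.pi)

lemma stdPDF_eq (x : ℝ) :
    stdPDF x = Real.exp (-(1/2) * x ^ 2) * (Real.sqrt (2 * Real.pi))⁻¹ := by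
  unfold stdPDF
  rw [div_eq_mul_inv]
  ring_nf

lemma stdPDF_nonneg (x : ℝ) : 0 ≤ stdPDF x := by
  unfold stdPDF
  positivity

lemma integrable_stdPDF : Integrable stdPDF := by
  have h := (integrable_exp_neg_mul_sq (by norm_num : (0:ℝ) < 1/2)).mul_const
    (Real.sqrt (2 * Real.pi))⁻¹
  exact h.congr (Filter.Eventually.of_forall fun x => (stdPDF_eq x).symm)

lemma integrable_sq_gauss :
    Integrable (fun x : ℝ => x ^ 2 * Real.exp (-(1/2) * x ^ 2)) := by
  have h := integrable_rpow_mul_exp_neg_mul_sq (b := 1/2) (by norm_num)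
    (s := 2) (by norm_num)
  refine h.congr (Filter.Eventually.of_forall fun x => ?_)
  simp only []
  congr 1
  rw [← Real.rpow_natCast x 2]
  norm_num

lemma integrable_sq_stdPDF : Integrable (fun x : ℝ => x ^ 2 * stdPDF x) := by
  have h := integrable_sq_gauss.mul_const (Real.sqrt (2 * Real.pi))⁻¹
  refine h.congr (Filter.Eventually.of_forall fun x => ?_)
  simp only [stdPDF_eq]
  ring

lemma tendsto_neg_mul_gauss :
    Tendsto (fun x : ℝ => -x * Real.exp (-(1/2) * x ^ 2)) atTop (𝓝 0) := by
  have h0 := rpow_mul_exp_neg_mul_sq_isLittleO_exp_neg (b := 1/2) (by norm_num) 1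
  have h1 : Tendsto (fun x : ℝ => x * Real.exp (-(1/2) * x ^ 2)) atTop (𝓝 0) := by
    have h2 : (fun x : ℝ => x * Real.exp (-(1/2) * x ^ 2))
        =o[atTop] fun x : ℝ => Real.exp (-(1/2) * x) := by
      refine h0.congr' ?_ (Filter.EventuallyEq.refl _ _)
      filter_upwards [eventually_gt_atTop (0:ℝ)] with x hx
      rw [Real.rpow_one]
    refine h2.trans_tendsto ?_
    have hlin : Tendsto (fun x : ℝ => -(1/2) * x) atTop atBot :=
      (tendsto_const_mul_atBot_of_neg (by norm_num)).2 tendsto_id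
    exact Real.tendsto_exp_atBot.comp hlin
  have h3 := h1.neg
  refine h3.congr' (Filter.Eventually.of_forall fun x => by ring) |>.mono_right ?_
  simp

lemma integral_sq_gauss_Ioi :
    ∫ x in Ioi (0:ℝ), x ^ 2 * Real.exp (-(1/2) * x ^ 2)
      = Real.sqrt (2 * Real.pi) / 2 := by
  have hint : Integrable (fun x : ℝ => (x ^ 2 - 1) * Real.exp (-(1/2) * x ^ 2)) := by
    have h := integrable_sq_gauss.sub (integrable_exp_neg_mul_sq (by norm_num : (0:ℝ) < 1/2))
    exact h.congr (Filter.Eventually.of_forall fun x => by simp only [Pi.sub_apply]; ring)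
  have key : ∫ x in Ioi (0:ℝ), (x ^ 2 - 1) * Real.exp (-(1/2) * x ^ 2) = 0 := by
    have := integral_Ioi_of_hasDerivAt_of_tendsto'
      (f := fun x : ℝ => -x * Real.exp (-(1/2) * x ^ 2))
      (f' := fun x : ℝ => (x ^ 2 - 1) * Real.exp (-(1/2) * x ^ 2))
      (a := 0) (m := 0)
      (fun x _ => by
        have hexp : HasDerivAt (fun x : ℝ => Real.exp (-(1/2) * x ^ 2))
            (Real.exp (-(1/2) * x ^ 2) * (-(1/2) * (2 * x ^ 1))) x :=
          (((hasDerivAt_pow 2 x).const_mul (-(1/2)))).exp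
        have hid : HasDerivAt (fun x : ℝ => -x) (-1) x := (hasDerivAt_id x).neg
        have := hid.fun_mul hexp
        refine this.congr_deriv ?_
        ring)
      hint.integrableOn tendsto_neg_mul_gauss
    simpa using this
  have hsub : ∫ x in Ioi (0:ℝ), (x ^ 2 - 1) * Real.exp (-(1/2) * x ^ 2)
      = (∫ x in Ioi (0:ℝ), x ^ 2 * Real.exp (-(1/2) * x ^ 2))
        - ∫ x in Ioi (0:ℝ), Real.exp (-(1/2) * x ^ 2) := by
    rw [← integral_sub integrable_sq_gauss.integrableOn
      (integrable_exp_neg_mul_sq (by norm_num : (0:ℝ) < 1/2)).integrableOn]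
    exact setIntegral_congr_fun measurableSet_Ioi (fun x _ => by ring)
  have hg : ∫ x in Ioi (0:ℝ), Real.exp (-(1/2) * x ^ 2) = Real.sqrt (2 * Real.pi) / 2 := by
    rw [show (2 * Real.pi) = Real.pi / (1/2) by ring]
    exact integral_gaussian_Ioi (1/2)
  rw [key, hg] at hsub
  linarith

lemma V_eq : ∫ x in Ioi (0:ℝ), x ^ 2 * stdPDF x = 1/2 := by
  have h1 : ∫ x in Ioi (0:ℝ), x ^ 2 * stdPDF x
      = (∫ x in Ioi (0:ℝ), x ^ 2 * Real.exp (-(1/2) * x ^ 2)) * (Real.sqrt (2 * Real.pi))⁻¹ := by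
    rw [← integral_mul_const]
    exact setIntegral_congr_fun measurableSet_Ioi (fun x _ => by rw [stdPDF_eq, mul_assoc])
  have hs : (0:ℝ) < Real.sqrt (2 * Real.pi) := Real.sqrt_pos.mpr (by positivity)
  rw [h1, integral_sq_gauss_Ioi]
  field_simp

lemma integral_Ioi_split {f : ℝ → ℝ} (hf : Integrable f) {a : ℝ} (ha : 0 ≤ a) :
    ∫ x in Ioi a, f x = (∫ x in Ioi (0:ℝ), f x) - ∫ x in (0:ℝ)..a, f x := by
  rw [intervalIntegral.integral_of_le ha]
  have h := setIntegral_union (μ := volume) (f := f) (s := Set.Ioc (0:ℝ) a)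
    (t := Set.Ioi a) (Ioc_disjoint_Ioi le_rfl)
    measurableSet_Ioi hf.integrableOn hf.integrableOn
  rw [Ioc_union_Ioi_eq_Ioi ha] at h
  rw [h]; ring

noncomputable def Fint (a : ℝ) : ℝ := ∫ x in Set.Ioi a, (x ^ 2 - a ^ 2) * stdPDF x

noncomputable def Gfun (a : ℝ) : ℝ :=
  ((∫ x in Set.Ioi (0:ℝ), x ^ 2 * stdPDF x) - ∫ x in (0:ℝ)..a, x ^ 2 * stdPDF x)
  - a ^ 2 * ((∫ x in Set.Ioi (0:ℝ), stdPDF x) - ∫ x in (0:ℝ)..a, stdPDF x)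

lemma Fint_eq_Gfun {a : ℝ} (ha : 0 ≤ a) : Fint a = Gfun a := by
  unfold Fint Gfun
  have h1 : ∫ x in Set.Ioi a, (x ^ 2 - a ^ 2) * stdPDF x
      = (∫ x in Set.Ioi a, x ^ 2 * stdPDF x) - ∫ x in Set.Ioi a, a ^ 2 * stdPDF x := by
    rw [← integral_sub integrable_sq_stdPDF.integrableOn
      ((integrable_stdPDF.const_mul (a ^ 2)).integrableOn)]
    exact setIntegral_congr_fun measurableSet_Ioi (fun x _ => by ring)
  rw [h1, integral_Ioi_split integrable_sq_stdPDF ha,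
    integral_Ioi_split (integrable_stdPDF.const_mul (a ^ 2)) ha]
  rw [integral_const_mul, intervalIntegral.integral_const_mul]
  ring

lemma Gfun_continuous : Continuous Gfun := by
  have h1 := integrable_sq_stdPDF.continuous_primitive 0
  have h2 := integrable_stdPDF.continuous_primitive 0
  exact (continuous_const.sub h1).sub
    (((continuous_pow 2)).mul (continuous_const.sub h2))

lemma Gfun_zero : Gfun 0 = 1/2 := by
  unfold Gfun
  rw [intervalIntegral.integral_same, intervalIntegral.integral_same, V_eq]
  ring

lemma Fint_antitone {a b : ℝ} (ha : 0 ≤ a) (hab : a ≤ b) : Fint b ≤ Fint a := by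
  unfold Fint
  have hb : 0 ≤ b := ha.trans hab
  have hint : ∀ c : ℝ, IntegrableOn (fun x => (x ^ 2 - c ^ 2) * stdPDF x) (Ioi a) := by
    intro c
    refine ((integrable_sq_stdPDF.sub (integrable_stdPDF.const_mul (c ^ 2))).congr
      (Filter.Eventually.of_forall fun x => by simp only [Pi.sub_apply]; ring)).integrableOn
  calc ∫ x in Set.Ioi b, (x ^ 2 - b ^ 2) * stdPDF x
      ≤ ∫ x in Set.Ioi b, (x ^ 2 - a ^ 2) * stdPDF x := by
        refine setIntegral_mono ((hint b).mono_set (Ioi_subset_Ioi hab))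
          ((hint a).mono_set (Ioi_subset_Ioi hab)) (fun x => ?_)
        have hab2 : a ^ 2 ≤ b ^ 2 := pow_le_pow_left₀ ha hab 2
        nlinarith [mul_nonneg (sub_nonneg.2 hab2) (stdPDF_nonneg x)]
    _ ≤ ∫ x in Set.Ioi a, (x ^ 2 - a ^ 2) * stdPDF x := by
        refine setIntegral_mono_set (hint a) ?_ (HasSubset.Subset.eventuallyLE (Ioi_subset_Ioi hab))
        refine (ae_restrict_iff' measurableSet_Ioi).2 (Filter.Eventually.of_forall fun x hx => ?_)
        have hx' : a < x := hx
        show (0:ℝ) ≤ (x ^ 2 - a ^ 2) * stdPDF x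
        have hxa : a ^ 2 ≤ x ^ 2 := by nlinarith
        exact mul_nonneg (by linarith) (stdPDF_nonneg x)

lemma Fint_le_half {a : ℝ} (ha : 0 ≤ a) : Fint a ≤ 1/2 := by
  have h := Fint_antitone le_rfl ha
  rwa [Fint_eq_Gfun le_rfl, Gfun_zero] at h

theorem h_strictMono_limits_unique_zero (t δ : ℝ) (ht : 0 < t) (hδ : 1 / 2 < δ)
    (h : ℝ → ℝ)
    (hdef : ∀ τ : ℝ, h τ = δ - 1 / 2
      + (∫ x in Set.Ioi (2 / τ), (x ^ 2 - 4 / τ ^ 2) * stdPDF x) - t / τ ^ 2) :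
    StrictMonoOn h (Set.Ioi (0 : ℝ)) ∧
    Filter.Tendsto h (nhdsWithin 0 (Set.Ioi 0)) Filter.atBot ∧
    Filter.Tendsto h Filter.atTop (nhds δ) ∧ 0 < δ ∧
    ∃! τ : ℝ, τ ∈ Set.Ioi (0 : ℝ) ∧ h τ = 0 := by
  have hF : ∀ τ : ℝ, h τ = δ - 1 / 2 + Fint (2 / τ) - t / τ ^ 2 := by
    intro τ
    rw [hdef τ]
    unfold Fint
    rw [show (2 / τ) ^ 2 = 4 / τ ^ 2 by rw [div_pow]; norm_num]
  -- strict monotonicity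
  have hmono : StrictMonoOn h (Set.Ioi (0 : ℝ)) := by
    intro τ₁ h1 τ₂ h2 hlt
    have h1' : (0:ℝ) < τ₁ := h1
    have h2' : (0:ℝ) < τ₂ := h2
    have hFle : Fint (2 / τ₁) ≤ Fint (2 / τ₂) :=
      Fint_antitone (by positivity) (by
        apply div_le_div_of_nonneg_left (by norm_num) h1' hlt.le)
    have htlt : t / τ₂ ^ 2 < t / τ₁ ^ 2 := by
      apply div_lt_div_of_pos_left ht (by positivity)
      exact pow_lt_pow_left₀ hlt h1'.le two_ne_zero
    rw [hF τ₁, hF τ₂]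
    linarith
  -- tendsto atBot at 0⁺
  have hbot : Filter.Tendsto h (nhdsWithin 0 (Set.Ioi 0)) Filter.atBot := by
    have hg : Tendsto (fun τ : ℝ => δ - 1 / 2 + 1/2 - t / τ ^ 2)
        (nhdsWithin 0 (Set.Ioi 0)) atBot := by
      have hsq : Tendsto (fun τ : ℝ => τ ^ 2) (nhdsWithin 0 (Set.Ioi 0))
          (nhdsWithin 0 (Set.Ioi 0)) := by
        rw [tendsto_nhdsWithin_iff]
        constructor
        · have : Tendsto (fun τ : ℝ => τ ^ 2) (𝓝 0) (𝓝 0) := by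
            simpa using (continuous_pow 2).tendsto (0:ℝ)
          exact this.mono_left nhdsWithin_le_nhds
        · filter_upwards [self_mem_nhdsWithin] with τ hτ
          exact pow_pos (mem_Ioi.mp hτ) 2
      have hinv : Tendsto (fun τ : ℝ => (τ ^ 2)⁻¹) (nhdsWithin 0 (Set.Ioi 0)) atTop :=
        tendsto_inv_nhdsGT_zero.comp hsq
      have hdiv : Tendsto (fun τ : ℝ => t / τ ^ 2) (nhdsWithin 0 (Set.Ioi 0)) atTop := by
        simp only [div_eq_mul_inv]
        exact hinv.const_mul_atTop ht
      have h' : Tendsto (fun τ : ℝ => -(t / τ ^ 2)) (nhdsWithin 0 (Set.Ioi 0)) atBot :=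
        tendsto_neg_atTop_atBot.comp hdiv
      have := tendsto_atBot_add_const_left _ (δ - 1/2 + 1/2) h'
      exact this.congr (fun τ => by ring)
    refine tendsto_atBot_mono' _ ?_ hg
    filter_upwards [self_mem_nhdsWithin] with τ hτ
    have hτ' : (0:ℝ) < τ := hτ
    rw [hF τ]
    have := Fint_le_half (a := 2 / τ) (by positivity)
    linarith
  -- tendsto δ at atTop
  have htop : Filter.Tendsto h Filter.atTop (nhds δ) := by
    have h2τ : Tendsto (fun τ : ℝ => 2 / τ) atTop (𝓝 0) := by
      simpa [div_eq_mul_inv] using tendsto_inv_atTop_zero.const_mul (2:ℝ)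
    have hGt : Tendsto (fun τ : ℝ => Gfun (2 / τ)) atTop (𝓝 (1/2)) := by
      have := (Gfun_continuous.tendsto 0).comp h2τ
      rwa [Gfun_zero] at this
    have hdiv : Tendsto (fun τ : ℝ => t / τ ^ 2) atTop (𝓝 0) := by
      have : Tendsto (fun τ : ℝ => (τ ^ 2)⁻¹) atTop (𝓝 0) :=
        tendsto_inv_atTop_zero.comp (tendsto_pow_atTop (two_ne_zero))
      simpa [div_eq_mul_inv] using this.const_mul t
    have hall : Tendsto (fun τ : ℝ => δ - 1 / 2 + Gfun (2 / τ) - t / τ ^ 2) atTop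
        (𝓝 (δ - 1/2 + 1/2 - 0)) :=
      (Filter.Tendsto.add tendsto_const_nhds hGt).sub hdiv
    have heq : ∀ᶠ τ : ℝ in atTop, δ - 1 / 2 + Gfun (2 / τ) - t / τ ^ 2 = h τ := by
      filter_upwards [eventually_gt_atTop (0:ℝ)] with τ hτ
      rw [hF τ, Fint_eq_Gfun (by positivity)]
    have := hall.congr' heq
    convert this using 2
    ring
  have hδ0 : 0 < δ := lt_trans (by norm_num) hδ
  refine ⟨hmono, hbot, htop, hδ0, ?_⟩
  -- existence of a zero
  have hcont : ContinuousOn h (Set.Ioi (0:ℝ)) := by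
    have : ContinuousOn (fun τ : ℝ => δ - 1 / 2 + Gfun (2 / τ) - t / τ ^ 2)
        (Set.Ioi (0:ℝ)) := by
      apply ContinuousOn.sub
      · apply ContinuousOn.add continuousOn_const
        exact Gfun_continuous.comp_continuousOn
          (continuousOn_const.div continuousOn_id (fun τ hτ => ne_of_gt hτ))
      · exact continuousOn_const.div ((continuous_pow 2).continuousOn)
          (fun τ hτ => pow_ne_zero 2 (ne_of_gt hτ))
    refine this.congr (fun τ hτ => ?_)
    have hτ' : (0:ℝ) < τ := hτ
    rw [hF τ, Fint_eq_Gfun (by positivity)]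
  obtain ⟨τ₁, hτ₁pos, hτ₁neg⟩ : ∃ τ₁ : ℝ, 0 < τ₁ ∧ h τ₁ < 0 := by
    have hev : ∀ᶠ τ in nhdsWithin 0 (Set.Ioi 0), h τ < 0 ∧ (0:ℝ) < τ := by
      filter_upwards [hbot.eventually (eventually_lt_atBot (0:ℝ)), self_mem_nhdsWithin]
        with τ h1 h2
      exact ⟨h1, h2⟩
    obtain ⟨τ, h1, h2⟩ := hev.exists
    exact ⟨τ, h2, h1⟩
  obtain ⟨τ₂, hτ₂gt, hτ₂pos⟩ : ∃ τ₂ : ℝ, τ₁ < τ₂ ∧ 0 < h τ₂ := by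
    have hev : ∀ᶠ τ in atTop, 0 < h τ ∧ τ₁ < τ := by
      filter_upwards [htop.eventually (eventually_gt_nhds hδ0), eventually_gt_atTop τ₁]
        with τ h1 h2
      exact ⟨h1, h2⟩
    obtain ⟨τ, h1, h2⟩ := hev.exists
    exact ⟨τ, h2, h1⟩
  have hIcc : Set.Icc τ₁ τ₂ ⊆ Set.Ioi (0:ℝ) := fun x hx => lt_of_lt_of_le hτ₁pos hx.1
  have hiv := intermediate_value_Icc hτ₂gt.le (hcont.mono hIcc)
  have h0mem : (0:ℝ) ∈ Set.Icc (h τ₁) (h τ₂) := ⟨hτ₁neg.le, hτ₂pos.le⟩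
  obtain ⟨c, hc, hc0⟩ := hiv h0mem
  refine ⟨c, ⟨hIcc hc, hc0⟩, ?_⟩
  rintro τ ⟨hτmem, hτ0⟩
  exact hmono.injOn hτmem (hIcc hc) (by rw [hτ0, hc0])
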